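/- Let F be a field and R = ℤ/2 × F. Then ZA(R) is a star graph with center (1,0): the vertex (1,0) is adjacent to every vertex (0,u) with u ∈ F nonzero, these are all the vertices, and no two vertices (0,u₁), (0,u₂) with u₁ ≠ u₂ are adjacent. -/

import Mathlib

theorem stmt15 {F : Type*} [Field F] :
    (((1 : ZMod 2), (0 : F)) ≠ 0 ∧ ¬ IsUnit ((1 : ZMod 2), (0 : F))) ∧
    (∀ z : ZMod 2 × F, z ≠ 0 → ¬ IsUnit z →
      z = ((1 : ZMod 2), (0 : F)) ∨ ∃ u : F, u ≠ 0 ∧ z = (0, u)) ∧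
    (∀ u : F, u ≠ 0 →
      {r : ZMod 2 × F | r * ((1 : ZMod 2), (0 : F)) = 0} ∩
        {r : ZMod 2 × F | r * ((0 : ZMod 2), u) = 0} = {0}) ∧
    (∀ u₁ u₂ : F, u₁ ≠ 0 → u₂ ≠ 0 → u₁ ≠ u₂ →
      {r : ZMod 2 × F | r * ((0 : ZMod 2), u₁) = 0} ∩
        {r : ZMod 2 × F | r * ((0 : ZMod 2), u₂) = 0} ≠ {0}) := by
  refine ⟨⟨?_, ?_⟩, ?_, ?_, ?_⟩
  · simp [Prod.ext_iff]
  · rw [isUnit_iff_exists_inv]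
    rintro ⟨⟨a, b⟩, h⟩
    rw [Prod.ext_iff] at h
    simpa using h.2
  · rintro ⟨a, b⟩ hz hu
    by_cases hb : b = 0
    · left
      subst hb
      fin_cases a
      · exact absurd (by rfl) hz
      · rfl
    · fin_cases a
      · exact Or.inr ⟨b, hb, rfl⟩
      · exact absurd (isUnit_iff_exists_inv.mpr ⟨(1, b⁻¹), by
          simp [Prod.ext_iff, hb]; rfl⟩) hu
  · intro u hu
    ext ⟨a, b⟩
    simp only [Set.mem_inter_iff, Set.mem_setOf_eq, Prod.mk_mul_mk, Prod.ext_iff,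
      Set.mem_singleton_iff, Prod.mk.injEq, mul_zero, mul_one, mul_comm]
    constructor
    · rintro ⟨⟨ha, -⟩, -, hb⟩
      exact ⟨ha, by rcases mul_eq_zero.mp hb with h | h;exacts [absurd h hu, h]⟩
    · rintro ⟨ha, hb⟩; simp [ha, hb]
  · intro u₁ u₂ h1 h2 hne h
    have : ((1 : ZMod 2), (0 : F)) ∈ ({0} : Set (ZMod 2 × F)) := by
      rw [← h]; constructor <;> simp
    simpa [Prod.ext_iff] using this
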